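/- Let V be a finite set and w : V × V → ℕ. For every subset Y ⊆ V, every v, u ∈ Y, and every integer k with 1 ≤ k < |Y|, the maximum-weight Hamiltonian-path function satisfies L(Y, v, u) = max over all Y' ⊆ Y with |Y'| = k, v ∈ Y', u ∉ Y', and over all y ∈ Y', of L(Y', v, y) + L((Y ∖ Y') ∪ {y}, y, u), where the maximum over an empty collection is ⊥. -/

import Mathlib

/-- The weight of a path `P = (v₁, …, v_ℓ)`, i.e. `∑_{j=2}^{ℓ} w(v_{j-1}, v_j)`. -/
def pathWeight {V : Type*} (w : V → V → ℕ) (P : List V) : ℕ :=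
  (List.zipWith w P P.tail).sum

/-- Duplicate-free lists whose set of entries is exactly `Y`, starting at `v` and
ending at `u`. -/
noncomputable def hamPaths {V : Type*} [DecidableEq V] (Y : Finset V) (v u : V) : Finset (List V) :=
  Y.toList.permutations.toFinset.filter
    (fun P => P.head? = some v ∧ P.getLast? = some u)

/-- `Lfun w Y v u` is the maximal weight of a duplicate-free path that visits exactly the
vertices of `Y`, starts at `v` and ends at `u`; it is `⊥` if no such path exists. -/
noncomputable def Lfun {V : Type*} [DecidableEq V] (w : V → V → ℕ) (Y : Finset V) (v u : V) : WithBot ℕ :=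
  (hamPaths Y v u).sup (fun P => ((pathWeight w P : ℕ) : WithBot ℕ))

section aux
set_option linter.unusedSectionVars false
variable {V : Type*} [DecidableEq V]

lemma pathWeight_cons_cons (w : V → V → ℕ) (a b : V) (l : List V) :
    pathWeight w (a :: b :: l) = w a b + pathWeight w (b :: l) := by
  simp [pathWeight]

lemma pathWeight_split (w : V → V → ℕ) (A : List V) (y : V) (B : List V) :
    pathWeight w (A ++ y :: B) = pathWeight w (A ++ [y]) + pathWeight w (y :: B) := by
  induction A with
  | nil => simp [pathWeight]
  | cons a A ih =>
    cases A with
    | nil => simp [pathWeight_cons_cons, pathWeight]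
    | cons c A' =>
      simp only [List.cons_append, pathWeight_cons_cons] at *
      omega

lemma mem_hamPaths {Y : Finset V} {v u : V} {P : List V} :
    P ∈ hamPaths Y v u ↔
      P.Nodup ∧ P.toFinset = Y ∧ P.head? = some v ∧ P.getLast? = some u := by
  simp only [hamPaths, Finset.mem_filter, List.mem_toFinset, List.mem_permutations]
  constructor
  · rintro ⟨hp, h1, h2⟩
    refine ⟨hp.nodup_iff.mpr Y.nodup_toList, ?_, h1, h2⟩
    rw [List.toFinset_eq_of_perm _ _ hp, Finset.toList_toFinset]
  · rintro ⟨hnd, hfs, h1, h2⟩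
    refine ⟨List.perm_of_nodup_nodup_toFinset_eq hnd Y.nodup_toList ?_, h1, h2⟩
    rw [hfs, Finset.toList_toFinset]

lemma combine_mem (w : V → V → ℕ) {Y Y' : Finset V} {v u y : V} (hY' : Y' ⊆ Y)
    (hyY' : y ∈ Y') (huY' : u ∉ Y')
    {P₁ P₂ : List V} (h1 : P₁ ∈ hamPaths Y' v y) (h2 : P₂ ∈ hamPaths ((Y \ Y') ∪ {y}) y u) :
    P₁ ++ P₂.tail ∈ hamPaths Y v u ∧
      pathWeight w (P₁ ++ P₂.tail) = pathWeight w P₁ + pathWeight w P₂ := by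
  rw [mem_hamPaths] at h1 h2
  obtain ⟨hnd1, hfs1, hh1, hl1⟩ := h1
  obtain ⟨hnd2, hfs2, hh2, hl2⟩ := h2
  obtain ⟨A, rfl⟩ : ∃ A, P₁ = A ++ [y] := by
    rcases P₁.eq_nil_or_concat with rfl | ⟨A, a, rfl⟩
    · simp at hl1
    · rw [List.concat_eq_append, List.getLast?_concat] at hl1
      exact ⟨A, by simp_all⟩
  obtain ⟨T, rfl⟩ : ∃ T, P₂ = y :: T := by
    cases P₂ with
    | nil => simp at hh2
    | cons a T => exact ⟨T, by simp_all⟩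
  have hyT : y ∉ T := (List.nodup_cons.mp hnd2).1
  have hndT : T.Nodup := (List.nodup_cons.mp hnd2).2
  have hTfs : T.toFinset = Y \ Y' := by
    have h : insert y T.toFinset = (Y \ Y') ∪ {y} := by simpa using hfs2
    have h2 := congrArg (Finset.erase · y) h
    rwa [Finset.erase_insert (by simpa using hyT), Finset.erase_union_distrib,
      Finset.erase_eq_of_notMem (show y ∉ Y \ Y' by simp [hyY']),
      Finset.erase_singleton, Finset.union_empty] at h2
  have hdisj : ∀ a ∈ A ++ [y], a ∉ T := by
    intro a ha hamem
    have h1 : a ∈ Y' := by rw [← hfs1]; exact List.mem_toFinset.mpr ha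
    have h2 : a ∈ Y \ Y' := by rw [← hTfs]; exact List.mem_toFinset.mpr hamem
    exact (Finset.mem_sdiff.mp h2).2 h1
  have hmain : (A ++ [y]) ++ (y :: T).tail = A ++ (y :: T) := by simp
  constructor
  · rw [mem_hamPaths, hmain]
    refine ⟨?_, ?_, ?_, ?_⟩
    · rw [show A ++ (y :: T) = (A ++ [y]) ++ T by simp]
      exact List.Nodup.append hnd1 hndT (by intro a ha hb; exact hdisj a ha hb)
    · rw [show A ++ (y :: T) = (A ++ [y]) ++ T by simp, List.toFinset_append, hfs1, hTfs]
      rw [Finset.union_comm]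
      exact Finset.sdiff_union_of_subset hY'
    · rw [show A ++ (y :: T) = (A ++ [y]) ++ T by simp]
      rw [List.head?_append, hh1]
      rfl
    · rw [List.getLast?_append, hl2]
      rfl
  · rw [hmain, pathWeight_split]

end aux

section aux2
set_option linter.unusedSectionVars false
variable {V : Type*} [DecidableEq V]

lemma getLast?_drop_eq {P : List V} {j : ℕ} (h : j < P.length) :
    (P.drop j).getLast? = P.getLast? := by
  conv_rhs => rw [← List.take_append_drop j P]
  rw [List.getLast?_append_of_ne_nil _ (by rw [ne_eq, List.drop_eq_nil_iff]; omega)]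

lemma split_mem (w : V → V → ℕ) {Y : Finset V} {v u : V} {P : List V}
    (hP : P ∈ hamPaths Y v u) {k : ℕ} (hk1 : 1 ≤ k) (hk2 : k < Y.card) :
    ∃ Y' y, Y' ⊆ Y ∧ Y'.card = k ∧ v ∈ Y' ∧ u ∉ Y' ∧ y ∈ Y' ∧
      P.take k ∈ hamPaths Y' v y ∧ P.drop (k-1) ∈ hamPaths ((Y \ Y') ∪ {y}) y u ∧
      pathWeight w P = pathWeight w (P.take k) + pathWeight w (P.drop (k-1)) := by
  rw [mem_hamPaths] at hP
  obtain ⟨hnd, hfs, hh, hl⟩ := hP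
  have hlen : P.length = Y.card := by rw [← hfs, List.toFinset_card_of_nodup hnd]
  have hk' : k - 1 < P.length := by omega
  have hkP : k < P.length := by omega
  set y := P[k-1] with hy
  have htake : P.take k = P.take (k-1) ++ [y] := by
    have h := List.take_concat_get hk'
    rw [show k - 1 + 1 = k from by omega] at h
    rw [← h, List.concat_eq_append]
  have hdrop : P.drop (k-1) = y :: P.drop k := by
    have h := List.drop_eq_getElem_cons hk'
    rw [show k - 1 + 1 = k from by omega] at h
    exact h
  have hPsplit : P = P.take (k-1) ++ (y :: P.drop k) := by
    conv_lhs => rw [← List.take_append_drop (k-1) P]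
    rw [hdrop]
  have hndtake : (P.take k).Nodup := hnd.sublist (List.take_sublist _ _)
  have hnddrop : (P.drop (k-1)).Nodup := hnd.sublist (List.drop_sublist _ _)
  set Y' := (P.take k).toFinset with hY'
  have hndsplit : (P.take k).Nodup ∧ (P.drop k).Nodup ∧ (P.take k).Disjoint (P.drop k) := by
    suffices h : (P.take k ++ P.drop k).Nodup by
      have h := List.nodup_append.mp h
      exact ⟨h.1, h.2.1, fun a ha hb => h.2.2 a ha a hb rfl⟩
    rw [List.take_append_drop]
    exact hnd
  have hdisjF : Disjoint Y' (P.drop k).toFinset := by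
    rw [Finset.disjoint_left]
    intro a ha hb
    exact hndsplit.2.2 (List.mem_toFinset.mp ha) (List.mem_toFinset.mp hb)
  have hYunion : Y = Y' ∪ (P.drop k).toFinset := by
    rw [← hfs]
    conv_lhs => rw [← List.take_append_drop k P]
    rw [List.toFinset_append]
  have hdropFS : (P.drop k).toFinset = Y \ Y' := by
    rw [hYunion, Finset.union_sdiff_cancel_left hdisjF]
  have hsub : Y' ⊆ Y := by rw [hYunion]; exact Finset.subset_union_left
  have hcard : Y'.card = k := by
    rw [hY', List.toFinset_card_of_nodup hndtake, List.length_take]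
    omega
  have hheadtake : (P.take k).head? = some v := by
    cases P with
    | nil => simp at hh
    | cons p P' =>
      obtain ⟨k', rfl⟩ : ∃ k', k = k' + 1 := ⟨k - 1, by omega⟩
      simp only [List.take_succ_cons, List.head?_cons]
      simpa using hh
  have hvY' : v ∈ Y' := by
    rw [hY', List.mem_toFinset]
    exact List.mem_of_mem_head? hheadtake
  have hudrop : u ∈ P.drop k := by
    have h := getLast?_drop_eq hkP
    rw [hl] at h
    obtain ⟨hne, rfl⟩ := List.mem_getLast?_eq_getLast (by rw [h]; rfl)
    exact List.getLast_mem hne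
  have huY' : u ∉ Y' := by
    intro hu'
    exact hndsplit.2.2 (List.mem_toFinset.mp hu') hudrop
  have hyY' : y ∈ Y' := by
    rw [hY', List.mem_toFinset, htake]
    simp
  refine ⟨Y', y, hsub, hcard, hvY', huY', hyY', ?_, ?_, ?_⟩
  · rw [mem_hamPaths]
    exact ⟨hndtake, rfl, hheadtake, by rw [htake, List.getLast?_concat]⟩
  · rw [mem_hamPaths]
    refine ⟨hnddrop, ?_, by rw [hdrop]; rfl, ?_⟩
    · rw [hdrop, List.toFinset_cons, hdropFS, Finset.insert_eq, Finset.union_comm]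
    · rw [getLast?_drop_eq hk']
      exact hl
  · conv_lhs => rw [hPsplit]
    rw [pathWeight_split, ← htake, ← hdrop]
end aux2
theorem stmt7 {V : Type*} [DecidableEq V] (w : V → V → ℕ) (Y : Finset V) (v u : V)
    (hv : v ∈ Y) (hu : u ∈ Y) (k : ℕ) (hk1 : 1 ≤ k) (hk2 : k < Y.card) :
    Lfun w Y v u =
      (Y.powerset.filter (fun Y' => Y'.card = k ∧ v ∈ Y' ∧ u ∉ Y')).sup
        (fun Y' => Y'.sup (fun y => Lfun w Y' v y + Lfun w ((Y \ Y') ∪ {y}) y u)) := by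
  apply le_antisymm
  · rw [Lfun]
    apply Finset.sup_le
    intro P hP
    obtain ⟨Y', y, hsub, hcard, hvY', huY', hyY', hmem1, hmem2, hw⟩ := split_mem w hP hk1 hk2
    have hY'mem : Y' ∈ Y.powerset.filter (fun Y' => Y'.card = k ∧ v ∈ Y' ∧ u ∉ Y') := by
      rw [Finset.mem_filter, Finset.mem_powerset]
      exact ⟨hsub, hcard, hvY', huY'⟩
    refine le_trans ?_ (Finset.le_sup (f := fun Y' => Y'.sup
      (fun y => Lfun w Y' v y + Lfun w ((Y \ Y') ∪ {y}) y u)) hY'mem)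
    refine le_trans ?_ (Finset.le_sup (f := fun y => Lfun w Y' v y +
      Lfun w ((Y \ Y') ∪ {y}) y u) hyY')
    rw [hw]
    push_cast
    exact add_le_add (Finset.le_sup (f := fun P => ((pathWeight w P : ℕ) : WithBot ℕ)) hmem1)
      (Finset.le_sup (f := fun P => ((pathWeight w P : ℕ) : WithBot ℕ)) hmem2)
  · apply Finset.sup_le
    intro Y' hY'
    rw [Finset.mem_filter, Finset.mem_powerset] at hY'
    obtain ⟨hsub, hcard, hvY', huY'⟩ := hY'
    apply Finset.sup_le
    intro y hy
    rcases eq_or_ne (Lfun w Y' v y) ⊥ with h1 | h1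
    · rw [h1, WithBot.bot_add]; exact bot_le
    rcases eq_or_ne (Lfun w ((Y \ Y') ∪ {y}) y u) ⊥ with h2 | h2
    · rw [h2, WithBot.add_bot]; exact bot_le
    have hne1 : (hamPaths Y' v y).Nonempty := by
      by_contra h
      rw [Finset.not_nonempty_iff_eq_empty] at h
      exact h1 (by rw [Lfun, h, Finset.sup_empty])
    have hne2 : (hamPaths ((Y \ Y') ∪ {y}) y u).Nonempty := by
      by_contra h
      rw [Finset.not_nonempty_iff_eq_empty] at h
      exact h2 (by rw [Lfun, h, Finset.sup_empty])
    obtain ⟨P₁, hP₁, hs1⟩ := Finset.exists_mem_eq_sup _ hne1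
      (fun P => ((pathWeight w P : ℕ) : WithBot ℕ))
    obtain ⟨P₂, hP₂, hs2⟩ := Finset.exists_mem_eq_sup _ hne2
      (fun P => ((pathWeight w P : ℕ) : WithBot ℕ))
    obtain ⟨hmem, hw⟩ := combine_mem w hsub hy huY' hP₁ hP₂
    calc Lfun w Y' v y + Lfun w ((Y \ Y') ∪ {y}) y u
        = ((pathWeight w (P₁ ++ P₂.tail) : ℕ) : WithBot ℕ) := by
          rw [Lfun, Lfun, hs1, hs2, hw]
          push_cast
          rfl
      _ ≤ Lfun w Y v u := Finset.le_sup (f := fun P => ((pathWeight w P : ℕ) : WithBot ℕ)) hmem
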